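/- For n ≥ 2 and k ≥ 1, the k-fold product i_n^(k) = i_n ⊗ ... ⊗ i_n of the identity permutation i_n ∈ S_n maps each x ∈ Z_{n^k} to the number whose base-n expansion is the reverse of the base-n expansion of x (using k digits). In particular, i_n^(k) is an involution. -/

import Mathlib

/-- The product `σ ⊗ τ` of `σ ∈ S_n` and `τ ∈ S_m`, as a function on `{0,...,nm-1}`. -/
def otimes (n m : ℕ) (σ τ : ℕ → ℕ) : ℕ → ℕ :=
  fun x => τ (x / n) + m * σ (x % n)

/-- Iterated (left-associated) product of a list of permutations (with degrees). -/
def prodPerm (l : List (ℕ × (ℕ → ℕ))) : ℕ × (ℕ → ℕ) :=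
  l.foldl (fun p q => (p.1 * q.1, otimes p.1 q.1 p.2 q.2)) (1, id)

/-- `i_n^(k)`: the `k`-fold product of the identity permutation of `{0,...,n-1}`. -/
def idPow (n k : ℕ) : ℕ → ℕ := (prodPerm (List.replicate k (n, id))).2

lemma prodPerm_fst (n k : ℕ) : (prodPerm (List.replicate k (n, id))).1 = n ^ k := by
  induction k with
  | zero => rfl
  | succ k ih =>
    rw [List.replicate_succ', prodPerm, List.foldl_append]
    simp only [List.foldl_cons, List.foldl_nil]
    rw [← prodPerm, ih]
    ring

lemma idPow_succ (n k x : ℕ) :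
    idPow n (k+1) x = x / n ^ k + n * idPow n k (x % n ^ k) := by
  unfold idPow
  rw [List.replicate_succ', prodPerm, List.foldl_append]
  simp only [List.foldl_cons, List.foldl_nil]
  rw [← prodPerm]
  show otimes _ n _ id x = _
  rw [prodPerm_fst]
  rfl

lemma idPow_lt (n : ℕ) (hn : 1 ≤ n) : ∀ k, ∀ x < n ^ k, idPow n k x < n ^ k := by
  intro k
  induction k with
  | zero => intro x hx; simpa [idPow, prodPerm] using hx
  | succ k ih =>
    intro x hx
    rw [idPow_succ]
    have h1 : x / n ^ k < n := Nat.div_lt_of_lt_mul (by simpa [pow_succ] using hx)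
    have h2 : idPow n k (x % n ^ k) < n ^ k := ih _ (Nat.mod_lt _ (Nat.pow_pos hn))
    have h2' : n * Nat.succ (idPow n k (x % n ^ k)) ≤ n * n ^ k :=
      Nat.mul_le_mul_left n (Nat.succ_le_of_lt h2)
    rw [Nat.mul_succ] at h2'
    have e : n * n ^ k = n ^ k * n := Nat.mul_comm _ _
    rw [pow_succ]
    omega

lemma idPow_snoc (n : ℕ) (hn : 1 ≤ n) : ∀ k, ∀ x < n ^ (k+1),
    idPow n (k+1) x = (x % n) * n ^ k + idPow n k (x / n) := by
  intro k
  induction k with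
  | zero =>
    intro x hx
    have hx' : x < n := by simpa using hx
    rw [idPow_succ]
    simp only [pow_zero, Nat.mod_one, Nat.div_one]
    rw [Nat.mod_eq_of_lt hx', Nat.div_eq_of_lt hx']
    simp [idPow, prodPerm]
  | succ k ih =>
    intro x hx
    rw [idPow_succ, ih (x % n ^ (k+1)) (Nat.mod_lt _ (Nat.pow_pos hn)),
        idPow_succ]
    have e1 : x % n ^ (k+1) % n = x % n :=
      Nat.mod_mod_of_dvd _ (dvd_pow_self n (Nat.succ_ne_zero k))
    have e2 : x % n ^ (k+1) / n = x / n % n ^ k := by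
      rw [pow_succ, mul_comm, Nat.mod_mul_right_div_self]
    have e3 : x / n ^ (k+1) = x / n / n ^ k := by
      rw [pow_succ, mul_comm, Nat.div_div_eq_div_mul]
    rw [e1, e2, e3]
    ring

lemma idPow_eq_sum (n : ℕ) (hn : 1 ≤ n) : ∀ k, ∀ x < n ^ k,
    idPow n k x = ∑ j ∈ Finset.range k, (x / n ^ j % n) * n ^ (k - 1 - j) := by
  intro k
  induction k with
  | zero =>
    intro x hx
    rw [pow_zero] at hx
    simpa [idPow, prodPerm] using (by omega : x = 0)
  | succ k ih =>
    intro x hx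
    rw [idPow_succ, Finset.sum_range_succ]
    have hxk : x / n ^ k < n := Nat.div_lt_of_lt_mul (by simpa [pow_succ] using hx)
    have h0 : x / n ^ k % n = x / n ^ k := Nat.mod_eq_of_lt hxk
    rw [ih (x % n ^ k) (Nat.mod_lt _ (Nat.pow_pos hn)), Finset.mul_sum]
    have hterm : ∀ j ∈ Finset.range k,
        n * ((x % n ^ k / n ^ j % n) * n ^ (k - 1 - j))
          = x / n ^ j % n * n ^ (k + 1 - 1 - j) := by
      intro j hj
      rw [Finset.mem_range] at hj
      have e1 : x % n ^ k / n ^ j = x / n ^ j % n ^ (k - j) := by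
        conv_lhs => rw [show n ^ k = n ^ j * n ^ (k - j) by
          rw [← pow_add]; congr 1; omega]
        exact Nat.mod_mul_right_div_self _ _ _
      have e2 : x / n ^ j % n ^ (k - j) % n = x / n ^ j % n :=
        Nat.mod_mod_of_dvd _ (dvd_pow_self n (by omega))
      have e3 : n ^ (k + 1 - 1 - j) = n * n ^ (k - 1 - j) := by
        rw [← pow_succ']
        congr 1
        omega
      rw [e1, e2, e3]
      ring
    rw [Finset.sum_congr rfl hterm, h0]
    have e4 : k + 1 - 1 - k = 0 := by omega
    rw [e4, pow_zero, mul_one, Nat.add_comm]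

lemma idPow_invol (n : ℕ) (hn : 1 ≤ n) : ∀ k, ∀ x < n ^ k,
    idPow n k (idPow n k x) = x := by
  intro k
  induction k with
  | zero =>
    intro x _
    rfl
  | succ k ih =>
    intro x hx
    have hp : 0 < n ^ k := Nat.pow_pos hn
    have hxm : x % n ^ k < n ^ k := Nat.mod_lt _ hp
    have hb : idPow n k (x % n ^ k) < n ^ k := idPow_lt n hn k _ hxm
    have ha : x / n ^ k < n := Nat.div_lt_of_lt_mul (by simpa [pow_succ] using hx)
    set a := x / n ^ k with hadef
    set b := idPow n k (x % n ^ k) with hbdef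
    have hx1 : idPow n (k + 1) x = a + n * b := idPow_succ n k x
    have hy : a + n * b < n ^ (k + 1) := by
      have h2' := Nat.mul_le_mul_left n (Nat.succ_le_of_lt hb)
      rw [Nat.mul_succ] at h2'
      have e : n * n ^ k = n ^ k * n := Nat.mul_comm _ _
      rw [pow_succ]
      omega
    rw [hx1, idPow_snoc n hn k _ hy]
    have hmod : (a + n * b) % n = a := by
      rw [Nat.add_mul_mod_self_left]
      exact Nat.mod_eq_of_lt ha
    have hdiv : (a + n * b) / n = b := by
      rw [Nat.add_mul_div_left _ _ (by omega : 0 < n), Nat.div_eq_of_lt ha, Nat.zero_add]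
    rw [hmod, hdiv, hbdef, ih _ hxm, Nat.add_comm]
    exact Nat.mod_add_div' x (n ^ k)

theorem idPow_reverses_digits (n k : ℕ) (hn : 2 ≤ n) (hk : 1 ≤ k) :
    (∀ x < n ^ k, idPow n k x = ∑ j ∈ Finset.range k, (x / n ^ (k - 1 - j) % n) * n ^ j) ∧
    (∀ x < n ^ k, idPow n k (idPow n k x) = x) := by
  constructor
  · intro x hx
    rw [idPow_eq_sum n (by omega) k x hx,
        ← Finset.sum_range_reflect (fun j => (x / n ^ (k - 1 - j) % n) * n ^ j) k]
    refine Finset.sum_congr rfl fun j hj => ?_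
    rw [Finset.mem_range] at hj
    have e : k - 1 - (k - 1 - j) = j := by omega
    rw [e]
  · intro x hx
    exact idPow_invol n (by omega) k x hx
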